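/- For every natural number n ≥ 1, Σ_{i=1}^{n} Σ_{j=1}^{n} C(n−i+j−1, j−1) · C(i−1+n−j, i−1) = (2n−1) · C(2n−2, n−1). -/

import Mathlib

open Finset

lemma csym (x y : ℕ) : (x + y).choose x = (x + y).choose y := by
  rw [← Nat.choose_symm (Nat.le_add_right x y)]
  congr 1
  omega

lemma vand (m t : ℕ) (ht : t ≤ 2*m) :
    ∑ b ∈ range (m+1), Nat.choose t b * Nat.choose (2*m - t) (m - b) = Nat.choose (2*m) m := by
  have h := Nat.add_choose_eq t (2*m - t) m
  rw [Finset.Nat.sum_antidiagonal_eq_sum_range_succ_mk] at h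
  rw [← h]
  congr 1
  omega

lemma key (m : ℕ) :
    ∑ a ∈ range (m+1), ∑ b ∈ range (m+1),
      Nat.choose (m - a + b) b * Nat.choose (a + (m - b)) a = (2*m+1) * Nat.choose (2*m) m := by
  set h : ℕ × ℕ → ℕ := fun p => Nat.choose p.1 p.2 * Nat.choose (2*m - p.1) (m - p.2) with hh
  set T := (range (m+1) ×ˢ range (m+1)).image (fun p : ℕ×ℕ => (m - p.1 + p.2, p.2)) with hT
  have step1 : ∑ a ∈ range (m+1), ∑ b ∈ range (m+1),
      Nat.choose (m - a + b) b * Nat.choose (a + (m - b)) a = ∑ p ∈ T, h p := by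
    rw [hT, Finset.sum_image]
    · rw [Finset.sum_product]
      refine Finset.sum_congr rfl fun a ha => Finset.sum_congr rfl fun b hb => ?_
      simp only [mem_range] at ha hb
      have h1 : 2*m - (m - a + b) = a + (m - b) := by omega
      simp only [hh, h1]
      rw [csym]
    · intro p hp q hq hpq
      simp only [mem_coe, mem_product, mem_range] at hp hq
      have h1 : p.2 = q.2 := (Prod.mk.injEq _ _ _ _).mp hpq |>.2
      have h2 := (Prod.mk.injEq _ _ _ _).mp hpq |>.1
      ext <;> omega
  have hsub : T ⊆ range (2*m+1) ×ˢ range (m+1) := by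
    intro p hp
    simp only [hT, mem_image, mem_product, mem_range] at hp ⊢
    obtain ⟨q, hq, rfl⟩ := hp
    omega
  have hzero : ∀ p ∈ range (2*m+1) ×ˢ range (m+1), p ∉ T → h p = 0 := by
    rintro ⟨t, b⟩ hp hnp
    simp only [mem_product, mem_range] at hp
    simp only [hT, mem_image, mem_product, mem_range, not_exists, Prod.mk.injEq] at hnp
    obtain ⟨hp1, hp2⟩ := hp
    rcases lt_or_ge t b with hc | hc
    · simp [hh, Nat.choose_eq_zero_of_lt hc]
    · rcases le_or_gt t (m + b) with hc2 | hc2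
      · exact (hnp (m + b - t, b) ⟨⟨by omega, by omega⟩, by omega, rfl⟩).elim
      · simp only [hh]
        rw [Nat.choose_eq_zero_of_lt (show 2*m - t < m - b by omega), mul_zero]
  rw [step1, Finset.sum_subset hsub hzero, Finset.sum_product,
    Finset.sum_congr rfl (fun t ht => vand m t (by simp only [mem_range] at ht; omega))]
  simp [mul_comm]

/-- Theorem 3 of the paper: the number of all ideals of the ring `R_n(K,J)` is
`Ω(n) = (2n-1)·C(2n-2, n-1)`. -/
theorem ideals_count (n : ℕ) (hn : 1 ≤ n) :
    ∑ i ∈ Finset.Icc 1 n, ∑ j ∈ Finset.Icc 1 n,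
      Nat.choose (n - i + j - 1) (j - 1) * Nat.choose (i - 1 + n - j) (i - 1) =
      (2 * n - 1) * Nat.choose (2 * n - 2) (n - 1) := by
  obtain ⟨m, rfl⟩ : ∃ m, n = m + 1 := ⟨n - 1, by omega⟩
  have hI : Finset.Icc 1 (m+1) = (range (m+1)).image (· + 1) := by
    ext x
    simp only [mem_Icc, mem_image, mem_range]
    constructor
    · rintro ⟨h1, h2⟩; exact ⟨x - 1, by omega, by omega⟩
    · rintro ⟨a, ha, rfl⟩; omega
  rw [hI, Finset.sum_image (by intro a _ b _ h; simp only at h; omega)]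
  rw [Finset.sum_congr rfl (fun a ha => Finset.sum_image
    (f := fun j => Nat.choose ((m+1) - (a+1) + j - 1) (j - 1) *
      Nat.choose ((a+1) - 1 + (m+1) - j) ((a+1) - 1)) (by intro a _ b _ h; simp only at h; omega))]
  have heq : ∀ a ∈ range (m+1), ∀ b ∈ range (m+1),
      Nat.choose ((m+1) - (a+1) + (b+1) - 1) ((b+1) - 1) *
        Nat.choose ((a+1) - 1 + (m+1) - (b+1)) ((a+1) - 1)
      = Nat.choose (m - a + b) b * Nat.choose (a + (m - b)) a := by
    intro a ha b hb
    simp only [mem_range] at ha hb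
    congr 2 <;> omega
  rw [Finset.sum_congr rfl (fun a ha => Finset.sum_congr rfl (fun b hb => heq a ha b hb)), key m]
  congr 2 <;> omega
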